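/- Let r be a positive integer, n ≥ 1, and a₁, ..., a_{n−1} integers with 0 ≤ a_j < r and gcd(r, a₁) = 1. Let l = min{ i : 0 < i ≤ r and a_j·i ≡ i (mod r) for all 1 ≤ j ≤ n−1 }. Define g(h) = |{(b₀, b₁, ..., b_{n−1}) ∈ ℤ≥0ⁿ : l·(b₀+b₁+⋯+b_{n−1})/r < h and b₀ + a₁b₁ + ⋯ + a_{n−1}b_{n−1} ≡ 0 (mod r)}|. Then g(h)·n!/hⁿ tends to r^{n−1}/lⁿ as h → ∞. -/

import Mathlib

open Filter Finset


def simplexF (k M : ℕ) : Finset (Fin k → ℕ) :=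
  (Fintype.piFinset fun _ => Finset.range (M+1)).filter fun b => ∑ i, b i ≤ M

lemma mem_simplexF {k M : ℕ} {b : Fin k → ℕ} : b ∈ simplexF k M ↔ ∑ i, b i ≤ M := by
  simp only [simplexF, Finset.mem_filter, Fintype.mem_piFinset, Finset.mem_range]
  refine ⟨fun h => h.2, fun h => ⟨fun i => ?_, h⟩⟩
  exact lt_of_le_of_lt (le_trans (Finset.single_le_sum (fun i _ => Nat.zero_le _) (Finset.mem_univ i)) h) (Nat.lt_succ_self M)

lemma card_simplexF (k M : ℕ) : (simplexF k M).card = (M + k).choose k := by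
  induction k generalizing M with
  | zero =>
    have h : simplexF 0 M = {fun _ => (0:ℕ)} := by
      ext b
      simp only [mem_simplexF, Finset.mem_singleton]
      constructor
      · intro _; exact funext fun i => i.elim0
      · intro h; subst h; simp
    rw [h]
    simp
  | succ k ih =>
    have hmap : ∀ b ∈ simplexF (k+1) M, b 0 ∈ Finset.range (M+1) := by
      intro b hb
      rw [mem_simplexF] at hb
      rw [Finset.mem_range, Nat.lt_succ_iff]
      exact le_trans (Finset.single_le_sum (fun i _ => Nat.zero_le _) (Finset.mem_univ 0)) hb
    rw [Finset.card_eq_sum_card_fiberwise hmap]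
    have hfib : ∀ x ∈ Finset.range (M+1),
        ((simplexF (k+1) M).filter fun b => b 0 = x).card = (M - x + k).choose k := by
      intro x hx
      rw [Finset.mem_range, Nat.lt_succ_iff] at hx
      rw [← ih (M - x)]
      refine Finset.card_bij' (fun b _ => Fin.tail b) (fun t _ => Fin.cons x t) ?_ ?_ ?_ ?_
      · intro b hb
        rw [Finset.mem_filter, mem_simplexF, Fin.sum_univ_succ] at hb
        rw [mem_simplexF]
        obtain ⟨hsum, hbx⟩ := hb
        rw [hbx] at hsum
        have : ∑ i : Fin k, b i.succ ≤ M - x := by omega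
        simpa [Fin.tail] using this
      · intro t ht
        rw [mem_simplexF] at ht
        rw [Finset.mem_filter, mem_simplexF, Fin.sum_univ_succ]
        refine ⟨?_, by simp⟩
        simp only [Fin.cons_zero, Fin.cons_succ]
        omega
      · intro b hb
        rw [Finset.mem_filter] at hb
        conv_rhs => rw [← Fin.cons_self_tail b]
        show Fin.cons x (Fin.tail b) = Fin.cons (b 0) (Fin.tail b)
        rw [hb.2]
      · intro t _; simp
    rw [Finset.sum_congr rfl hfib]
    have h1 : ∑ x ∈ Finset.range (M+1), (M - x + k).choose k
        = ∑ x ∈ Finset.range (M+1), (x + k).choose k := by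
      rw [← Finset.sum_range_reflect]
      refine Finset.sum_congr rfl fun x hx => ?_
      rw [Finset.mem_range, Nat.lt_succ_iff] at hx
      congr 2
      omega
    have h2 : ∑ x ∈ Finset.range (M+1), (x + k).choose k = ∑ i ∈ Finset.Icc k (M + k), i.choose k := by
      rw [← Finset.Ico_add_one_right_eq_Icc, Finset.sum_Ico_eq_sum_range]
      have : M + k + 1 - k = M + 1 := by omega
      rw [this]
      exact Finset.sum_congr rfl fun x _ => by rw [Nat.add_comm]
    rw [h1, h2, Nat.sum_Icc_choose]
    rw [Nat.add_assoc]


lemma card_residue_exact (q r c : ℕ) (hc : c < r) :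
    ((Finset.range (q*r)).filter fun x => x % r = c).card = q := by
  have hr : 0 < r := Nat.pos_of_ne_zero (by rintro rfl; omega)
  have key : ((Finset.range (q*r)).filter fun x => x % r = c).card = (Finset.range q).card := by
    refine Finset.card_bij' (fun x _ => x / r) (fun i _ => i * r + c) ?_ ?_ ?_ ?_
    · intro x hx
      simp only [Finset.mem_filter, Finset.mem_range] at hx
      simp only [Finset.mem_range]
      exact Nat.div_lt_of_lt_mul (by rw [Nat.mul_comm]; exact hx.1)
    · intro i hi
      simp only [Finset.mem_range] at hi
      simp only [Finset.mem_filter, Finset.mem_range]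
      constructor
      · calc i * r + c < i * r + r := by omega
          _ = (i+1) * r := by ring
          _ ≤ q * r := Nat.mul_le_mul_right r hi
      · rw [Nat.mul_comm i r, Nat.mul_add_mod, Nat.mod_eq_of_lt hc]
    · intro x hx
      simp only [Finset.mem_filter, Finset.mem_range] at hx
      show x / r * r + c = x
      rw [← hx.2, Nat.div_add_mod']
    · intro i _
      show (i * r + c) / r = i
      rw [Nat.mul_comm i r, Nat.mul_add_div hr, Nat.div_eq_of_lt hc]
      omega
  rw [key, Finset.card_range]

lemma card_residue (N r c : ℕ) (hc : c < r) :
    N / r ≤ ((Finset.range N).filter fun x => x % r = c).card ∧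
    ((Finset.range N).filter fun x => x % r = c).card ≤ N / r + 1 := by
  have hr : 0 < r := Nat.pos_of_ne_zero (by rintro rfl; omega)
  constructor
  · rw [← card_residue_exact (N/r) r c hc]
    apply Finset.card_le_card
    apply Finset.filter_subset_filter
    intro x hx
    rw [Finset.mem_range] at *
    calc x < N/r * r := hx
      _ ≤ N := Nat.div_mul_le_self N r
  · rw [← card_residue_exact (N/r + 1) r c hc]
    apply Finset.card_le_card
    apply Finset.filter_subset_filter
    intro x hx
    rw [Finset.mem_range] at *
    calc x < N := hx
      _ = r * (N/r) + N % r := (Nat.div_add_mod N r).symm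
      _ < r * (N/r) + r := by have := Nat.mod_lt N hr; omega
      _ = (N/r + 1) * r := by ring

lemma exists_residue (r : ℕ) (hr : 0 < r) (s : ℕ) :
    ∃ c < r, ∀ b0 : ℕ, (b0 + s) % r = 0 ↔ b0 % r = c := by
  haveI : NeZero r := ⟨hr.ne'⟩
  refine ⟨(-(s : ZMod r)).val, ZMod.val_lt _, fun b0 => ?_⟩
  rw [← Nat.dvd_iff_mod_eq_zero, ← ZMod.natCast_eq_zero_iff, ← ZMod.val_natCast]
  push_cast
  rw [add_eq_zero_iff_eq_neg]
  constructor
  · intro h; rw [h]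
  · intro h
    have := congrArg (fun v : ℕ => (v : ZMod r)) h
    simpa [ZMod.natCast_val] using this



lemma fiber_eq {m : ℕ} (K : ℕ) (t : Fin m → ℕ) (ht : ∑ j, t j ≤ K)
    (p : ℕ → Prop) [DecidablePred p] :
    ((simplexF (m+1) K).filter fun b => p (b 0) ∧ Fin.tail b = t).card
      = ((Finset.range (K - ∑ j, t j + 1)).filter fun x => p x).card := by
  refine Finset.card_bij' (fun b _ => b 0) (fun x _ => Fin.cons x t) ?_ ?_ ?_ ?_
  · intro b hb
    simp only [Finset.mem_filter, mem_simplexF, Fin.sum_univ_succ] at hb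
    obtain ⟨hsum, hp, htail⟩ := hb
    simp only [Finset.mem_filter, Finset.mem_range]
    refine ⟨?_, hp⟩
    have hs : ∑ i : Fin m, b i.succ = ∑ j, t j := by
      rw [← htail]; rfl
    rw [hs] at hsum
    omega
  · intro x hx
    simp only [Finset.mem_filter, Finset.mem_range] at hx
    simp only [Finset.mem_filter, mem_simplexF, Fin.sum_univ_succ, Fin.cons_zero, Fin.cons_succ]
    exact ⟨by omega, hx.2, rfl⟩
  · intro b hb
    simp only [Finset.mem_filter] at hb
    show Fin.cons (b 0) t = b
    rw [← hb.2.2]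
    exact Fin.cons_self_tail b
  · intro x _
    rfl




lemma count_bounds (m r : ℕ) (hr : 0 < r) (a : Fin m → ℕ) (K : ℕ) :
    (K + (m+1)).choose (m+1) ≤
      r * ((simplexF (m+1) K).filter fun b => (b 0 + ∑ j : Fin m, a j * b j.succ) % r = 0).card
        + r * ((K+m).choose m) ∧
    r * ((simplexF (m+1) K).filter fun b => (b 0 + ∑ j : Fin m, a j * b j.succ) % r = 0).card
      ≤ (K + (m+1)).choose (m+1) + r * ((K+m).choose m) := by
  set G := (simplexF (m+1) K).filter fun b => (b 0 + ∑ j : Fin m, a j * b j.succ) % r = 0 with hGdef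
  have hmap : ∀ b ∈ G, Fin.tail b ∈ simplexF m K := by
    intro b hb
    simp only [hGdef, Finset.mem_filter, mem_simplexF, Fin.sum_univ_succ] at hb
    rw [mem_simplexF]
    have h : ∑ j : Fin m, Fin.tail b j = ∑ i : Fin m, b i.succ := rfl
    rw [h]; omega
  have hG : G.card = ∑ t ∈ simplexF m K, ((G.filter fun b => Fin.tail b = t)).card :=
    Finset.card_eq_sum_card_fiberwise hmap
  have hfib : ∀ t ∈ simplexF m K,
      (K - ∑ j, t j + 1) ≤ r * (G.filter fun b => Fin.tail b = t).card + r ∧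
      r * (G.filter fun b => Fin.tail b = t).card ≤ (K - ∑ j, t j + 1) + r := by
    intro t ht
    rw [mem_simplexF] at ht
    obtain ⟨c, hc, hiff⟩ := exists_residue r hr (∑ j, a j * t j)
    have h1 : (G.filter fun b => Fin.tail b = t)
        = (simplexF (m+1) K).filter fun b => (b 0) % r = c ∧ Fin.tail b = t := by
      rw [hGdef, Finset.filter_filter]
      apply Finset.filter_congr
      intro b _
      have hsums : Fin.tail b = t → ∑ j : Fin m, a j * b j.succ = ∑ j, a j * t j := by
        intro htail; rw [← htail]; rfl
      constructor
      · rintro ⟨hcong, htail⟩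
        refine ⟨?_, htail⟩
        rw [← hiff, ← hsums htail]
        exact hcong
      · rintro ⟨hres, htail⟩
        exact ⟨by rw [hsums htail, hiff]; exact hres, htail⟩
    rw [h1, fiber_eq K t ht (fun x => x % r = c)]
    set N := K - ∑ j, t j + 1 with hN
    obtain ⟨hlow, hhigh⟩ := card_residue N r c hc
    have e1 := Nat.div_add_mod N r
    have e2 : N % r < r := Nat.mod_lt N hr
    have e3 := Nat.mul_le_mul_left r hlow
    have e4 := Nat.mul_le_mul_left r hhigh
    rw [Nat.mul_add, Nat.mul_one] at e4
    exact ⟨by omega, by omega⟩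
  have hsum : ∑ t ∈ simplexF m K, (K - ∑ j, t j + 1) = (simplexF (m+1) K).card := by
    have hmap2 : ∀ b ∈ simplexF (m+1) K, Fin.tail b ∈ simplexF m K := by
      intro b hb
      rw [mem_simplexF] at hb ⊢
      have h : ∑ j : Fin m, Fin.tail b j = ∑ i : Fin m, b i.succ := rfl
      rw [h, Fin.sum_univ_succ] at *
      omega
    rw [Finset.card_eq_sum_card_fiberwise hmap2]
    apply Finset.sum_congr rfl
    intro t ht
    rw [mem_simplexF] at ht
    have h2 : ((simplexF (m+1) K).filter fun b => Fin.tail b = t)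
        = (simplexF (m+1) K).filter fun b => (fun _ : ℕ => True) (b 0) ∧ Fin.tail b = t := by
      simp
    rw [h2, fiber_eq K t ht (fun _ => True), Finset.filter_true_of_mem (fun _ _ => trivial),
      Finset.card_range]
  have key1 : (simplexF (m+1) K).card ≤ r * G.card + r * (simplexF m K).card := by
    rw [← hsum, hG, Finset.mul_sum]
    calc ∑ t ∈ simplexF m K, (K - ∑ j, t j + 1)
        ≤ ∑ t ∈ simplexF m K, (r * (G.filter fun b => Fin.tail b = t).card + r) :=
          Finset.sum_le_sum fun t ht => (hfib t ht).1
      _ = (∑ t ∈ simplexF m K, r * (G.filter fun b => Fin.tail b = t).card)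
            + (simplexF m K).card * r := by
          rw [Finset.sum_add_distrib, Finset.sum_const, smul_eq_mul]
      _ = (∑ t ∈ simplexF m K, r * (G.filter fun b => Fin.tail b = t).card)
            + r * (simplexF m K).card := by ring
  have key2 : r * G.card ≤ (simplexF (m+1) K).card + r * (simplexF m K).card := by
    rw [← hsum, hG, Finset.mul_sum]
    calc ∑ t ∈ simplexF m K, r * (G.filter fun b => Fin.tail b = t).card
        ≤ ∑ t ∈ simplexF m K, ((K - ∑ j, t j + 1) + r) :=
          Finset.sum_le_sum fun t ht => (hfib t ht).2
      _ = (∑ t ∈ simplexF m K, (K - ∑ j, t j + 1)) + (simplexF m K).card * r := by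
          rw [Finset.sum_add_distrib, Finset.sum_const, smul_eq_mul]
      _ = (∑ t ∈ simplexF m K, (K - ∑ j, t j + 1)) + r * (simplexF m K).card := by ring
  rw [card_simplexF, card_simplexF] at key1 key2
  exact ⟨key1, key2⟩


lemma choose_mul_factorial_eq (K n : ℕ) :
    (K + n).choose n * n.factorial = ∏ i ∈ Finset.range n, (K + 1 + i) := by
  have h1 : (K + n).choose n * n.factorial * K.factorial = (K + n).factorial := by
    have := Nat.choose_mul_factorial_mul_factorial (Nat.le_add_left n K)
    rwa [Nat.add_sub_cancel] at this
  clear h1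
  have h2 : ∀ n, (∏ i ∈ Finset.range n, (K + 1 + i)) * K.factorial = (K + n).factorial := by
    intro n
    induction n with
    | zero => simp
    | succ n ih =>
      rw [Finset.prod_range_succ]
      calc (∏ i ∈ Finset.range n, (K+1+i)) * (K+1+n) * K.factorial
          = (K+1+n) * ((∏ i ∈ Finset.range n, (K+1+i)) * K.factorial) := by ring
        _ = (K+1+n) * (K+n).factorial := by rw [ih]

        _ = (K + (n+1)).factorial := by
            rw [show K + (n+1) = (K+n)+1 by omega, Nat.factorial_succ]
            congr 1
            omega
  have h1 : (K + n).choose n * n.factorial * K.factorial = (K + n).factorial := by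
    have := Nat.choose_mul_factorial_mul_factorial (Nat.le_add_left n K)
    rwa [Nat.add_sub_cancel] at this
  exact Nat.eq_of_mul_eq_mul_right K.factorial_pos (h1.trans (h2 n).symm)

lemma natdiv_facts (l N : ℕ) (hl : 0 < l) (hN : 0 < N) :
    l * ((N - 1) / l) < N ∧ N ≤ l * ((N - 1) / l) + l := by
  have h1 := Nat.div_add_mod (N-1) l
  have h2 : (N-1) % l < l := Nat.mod_lt _ hl
  omega

lemma factor_tendsto (r l : ℕ) (hr : 0 < r) (hl : 0 < l) (i : ℕ) :
    Tendsto (fun h : ℕ => (((h * r - 1) / l : ℕ) + 1 + i : ℝ) / h) atTop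
      (nhds ((r : ℝ) / l)) := by
  have hl' : (0:ℝ) < l := by exact_mod_cast hl
  have hr' : (0:ℝ) < r := by exact_mod_cast hr
  have hup : Tendsto (fun h : ℕ => (r:ℝ)/l + (1 + i) / h) atTop (nhds ((r:ℝ)/l)) := by
    have := tendsto_natCast_atTop_atTop (R := ℝ) |>.inv_tendsto_atTop
    have h2 : Tendsto (fun h : ℕ => (1 + (i:ℝ)) / h) atTop (nhds 0) := by
      simpa [div_eq_mul_inv] using this.const_mul (1 + (i:ℝ))
    simpa using (tendsto_const_nhds.add h2)
  refine tendsto_of_tendsto_of_tendsto_of_le_of_le' tendsto_const_nhds hup ?_ ?_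
  · filter_upwards [eventually_ge_atTop 1] with h hh
    have hh' : (0:ℝ) < h := by exact_mod_cast hh
    set K : ℕ := (h * r - 1) / l with hK
    obtain ⟨hf1, hf2⟩ := natdiv_facts l (h*r) hl (by positivity)
    have hc2 : (h:ℝ) * r ≤ l * K + l := by exact_mod_cast hf2
    rw [div_le_div_iff₀ hl' hh']
    have e1 : (l:ℝ) * ((K:ℝ) + 1 + i) = l*K + l + l*i := by ring
    have e2 : (0:ℝ) ≤ (l:ℝ) * i := by positivity
    calc (r:ℝ) * h = h * r := by ring
      _ ≤ l*K + l := hc2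
      _ ≤ ((K:ℝ) + 1 + i) * l := by rw [mul_comm ((K:ℝ) + 1 + (i:ℝ)) (l:ℝ), e1]; linarith
  · filter_upwards [eventually_ge_atTop 1] with h hh
    have hh' : (0:ℝ) < h := by exact_mod_cast hh
    set K : ℕ := (h * r - 1) / l with hK
    obtain ⟨hf1, hf2⟩ := natdiv_facts l (h*r) hl (by positivity)
    have hc1 : (l:ℝ) * K ≤ h * r := by exact_mod_cast hf1.le
    have hKh : (K:ℝ)/h ≤ r/l := by
      rw [div_le_div_iff₀ hh' hl']
      calc (K:ℝ) * l = l * K := by ring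
        _ ≤ h * r := hc1
        _ = r * h := by ring
    have : ((K:ℝ) + 1 + i)/h = (K:ℝ)/h + (1+i)/h := by ring
    rw [this]
    push_cast
    linarith






lemma A_tendsto (m r l : ℕ) (hr : 0 < r) (hl : 0 < l) :
    Tendsto (fun h : ℕ =>
        ((((h*r-1)/l + (m+1)).choose (m+1) : ℕ) : ℝ) * (Nat.factorial (m+1) : ℝ)
          / ((r:ℝ) * (h:ℝ)^(m+1))) atTop (nhds ((r:ℝ)^m / (l:ℝ)^(m+1))) := by
  have hr' : (0:ℝ) < r := by exact_mod_cast hr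
  have hl' : (0:ℝ) < l := by exact_mod_cast hl
  have hprod : Tendsto (fun h : ℕ =>
      (1/(r:ℝ)) * ∏ i ∈ Finset.range (m+1), ((((h*r-1)/l : ℕ):ℝ) + 1 + i)/(h:ℝ)) atTop
      (nhds ((1/(r:ℝ)) * ∏ _i ∈ Finset.range (m+1), (r:ℝ)/(l:ℝ))) :=
    tendsto_const_nhds.mul (tendsto_finset_prod _ fun i _ => factor_tendsto r l hr hl i)
  have hval : (1/(r:ℝ)) * ∏ _i ∈ Finset.range (m+1), (r:ℝ)/(l:ℝ) = (r:ℝ)^m / (l:ℝ)^(m+1) := by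
    rw [Finset.prod_const, Finset.card_range, div_pow]
    field_simp
    ring
  rw [hval] at hprod
  refine hprod.congr' ?_
  filter_upwards [eventually_ge_atTop 1] with h hh
  have hh' : (0:ℝ) < h := by exact_mod_cast hh
  have hnat := choose_mul_factorial_eq ((h*r-1)/l) (m+1)
  have hcast : ((((h*r-1)/l + (m+1)).choose (m+1) : ℕ) : ℝ) * (Nat.factorial (m+1) : ℝ)
      = ∏ i ∈ Finset.range (m+1), ((((h*r-1)/l : ℕ):ℝ) + 1 + i) := by
    exact_mod_cast congrArg (Nat.cast : ℕ → ℝ) hnat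
  rw [hcast]
  rw [Finset.prod_div_distrib, Finset.prod_const, Finset.card_range]
  field_simp

set_option maxHeartbeats 1000000 in
lemma B_tendsto (m r l : ℕ) (hr : 0 < r) (hl : 0 < l) :
    Tendsto (fun h : ℕ =>
        ((((h*r-1)/l + m).choose m : ℕ) : ℝ) * (Nat.factorial (m+1) : ℝ) / (h:ℝ)^(m+1))
      atTop (nhds 0) := by
  have hprod : Tendsto (fun h : ℕ =>
      (((Nat.factorial (m+1) : ℝ))/(Nat.factorial m : ℝ))
        * (∏ i ∈ Finset.range m, ((((h*r-1)/l : ℕ):ℝ) + 1 + i)/(h:ℝ)) * ((h:ℝ))⁻¹) atTop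
      (nhds 0) := by
    have h1 : Tendsto (fun h : ℕ =>
        (((Nat.factorial (m+1) : ℝ))/(Nat.factorial m : ℝ))
          * (∏ i ∈ Finset.range m, ((((h*r-1)/l : ℕ):ℝ) + 1 + i)/(h:ℝ))) atTop
        (nhds ((((Nat.factorial (m+1) : ℝ))/(Nat.factorial m : ℝ)) * ∏ _i ∈ Finset.range m, (r:ℝ)/(l:ℝ))) :=
      tendsto_const_nhds.mul (tendsto_finset_prod _ fun i _ => factor_tendsto r l hr hl i)
    have h2 : Tendsto (fun h : ℕ => ((h:ℝ))⁻¹) atTop (nhds 0) :=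
      tendsto_natCast_atTop_atTop.inv_tendsto_atTop
    simpa using h1.mul h2
  refine hprod.congr' ?_
  filter_upwards [eventually_ge_atTop 1] with h hh
  have hh' : (0:ℝ) < h := by exact_mod_cast hh
  have hm' : (0:ℝ) < (Nat.factorial m : ℝ) := by exact_mod_cast Nat.factorial_pos m
  have hnat := choose_mul_factorial_eq ((h*r-1)/l) m
  have hcast : ((((h*r-1)/l + m).choose m : ℕ) : ℝ) * (Nat.factorial m : ℝ)
      = ∏ i ∈ Finset.range m, ((((h*r-1)/l : ℕ):ℝ) + 1 + i) := by
    exact_mod_cast congrArg (Nat.cast : ℕ → ℝ) hnat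
  rw [Finset.prod_div_distrib, Finset.prod_const, Finset.card_range, ← hcast]
  rw [pow_succ]
  field_simp

/-- Weighted multiplicity of ℂⁿ/ℤ_r(1,a₁,...,a_{n−1}) at the origin for the weighted
    blow up with all weights l/r, where n = m+1 ≥ 1:
    g(h)·n!/hⁿ → r^{n−1}/lⁿ. -/
theorem stmt2 (m r : ℕ) (hr : 0 < r) (a : Fin m → ℕ) (ha : ∀ j, a j < r)
    (hcop : ∀ hm : 0 < m, Nat.Coprime r (a ⟨0, hm⟩)) :
    ∀ l : ℕ, l = sInf {i : ℕ | 0 < i ∧ i ≤ r ∧ ∀ j : Fin m, a j * i ≡ i [MOD r]} →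
    Tendsto (fun h : ℕ =>
      ((Nat.card {b : Fin (m + 1) → ℕ //
          l * (∑ i, b i) < h * r ∧ (b 0 + ∑ j : Fin m, a j * b j.succ) % r = 0} : ℝ)
        * (Nat.factorial (m + 1) : ℝ)) / (h : ℝ) ^ (m + 1))
      atTop (nhds ((r : ℝ) ^ m / (l : ℝ) ^ (m + 1))) := by
  intro l hl
  have hmem : r ∈ {i : ℕ | 0 < i ∧ i ≤ r ∧ ∀ j : Fin m, a j * i ≡ i [MOD r]} := by
    refine ⟨hr, le_refl r, fun j => ?_⟩
    simp [Nat.ModEq, Nat.mul_mod_left, Nat.mod_self]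
  have hl0 : 0 < l := by rw [hl]; exact (Nat.sInf_mem ⟨r, hmem⟩).1
  have hr' : (0:ℝ) < r := by exact_mod_cast hr
  have hl' : (0:ℝ) < l := by exact_mod_cast hl0
  have hcard : ∀ h : ℕ, 1 ≤ h →
      Nat.card {b : Fin (m + 1) → ℕ //
          l * (∑ i, b i) < h * r ∧ (b 0 + ∑ j : Fin m, a j * b j.succ) % r = 0}
        = ((simplexF (m+1) ((h*r-1)/l)).filter
            fun b => (b 0 + ∑ j : Fin m, a j * b j.succ) % r = 0).card := by
    intro h hh
    have hiff : ∀ S : ℕ, (l * S < h * r ↔ S ≤ (h*r-1)/l) := by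
      intro S
      rw [Nat.le_div_iff_mul_le hl0]
      have hhr : 1 ≤ h * r := Nat.one_le_iff_ne_zero.2 (by positivity)
      have hcomm : l * S = S * l := Nat.mul_comm l S
      omega
    have hsetEq : {b : Fin (m + 1) → ℕ |
        l * (∑ i, b i) < h * r ∧ (b 0 + ∑ j : Fin m, a j * b j.succ) % r = 0}
        = ↑((simplexF (m+1) ((h*r-1)/l)).filter
            fun b => (b 0 + ∑ j : Fin m, a j * b j.succ) % r = 0) := by
      ext b
      simp only [Set.mem_setOf_eq, Finset.mem_coe, Finset.mem_filter, mem_simplexF]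
      rw [hiff]
    calc Nat.card {b : Fin (m + 1) → ℕ |
            l * (∑ i, b i) < h * r ∧ (b 0 + ∑ j : Fin m, a j * b j.succ) % r = 0}
        = Set.ncard {b : Fin (m + 1) → ℕ |
            l * (∑ i, b i) < h * r ∧ (b 0 + ∑ j : Fin m, a j * b j.succ) % r = 0} :=
          Nat.card_coe_set_eq _
      _ = _ := by rw [hsetEq, Set.ncard_coe_finset]
  have hAt := A_tendsto m r l hr hl0
  have hBt := B_tendsto m r l hr hl0
  have hlow : Tendsto (fun h : ℕ =>
      ((((h*r-1)/l + (m+1)).choose (m+1) : ℕ) : ℝ) * (Nat.factorial (m+1) : ℝ)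
        / ((r:ℝ) * (h:ℝ)^(m+1))
      - (((h*r-1)/l + m).choose m : ℕ) * (Nat.factorial (m+1) : ℝ) / (h:ℝ)^(m+1))
      atTop (nhds ((r:ℝ)^m/(l:ℝ)^(m+1))) := by
    simpa using hAt.sub hBt
  have hhigh : Tendsto (fun h : ℕ =>
      ((((h*r-1)/l + (m+1)).choose (m+1) : ℕ) : ℝ) * (Nat.factorial (m+1) : ℝ)
        / ((r:ℝ) * (h:ℝ)^(m+1))
      + (((h*r-1)/l + m).choose m : ℕ) * (Nat.factorial (m+1) : ℝ) / (h:ℝ)^(m+1))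
      atTop (nhds ((r:ℝ)^m/(l:ℝ)^(m+1))) := by
    simpa using hAt.add hBt
  refine tendsto_of_tendsto_of_tendsto_of_le_of_le' hlow hhigh ?_ ?_
  · filter_upwards [eventually_ge_atTop 1] with h hh
    have hh' : (0:ℝ) < h := by exact_mod_cast hh
    rw [hcard h hh]
    set g : ℕ := ((simplexF (m+1) ((h*r-1)/l)).filter
        fun b => (b 0 + ∑ j : Fin m, a j * b j.succ) % r = 0).card with hg
    have hcb := (count_bounds m r hr a ((h*r-1)/l)).1
    have hcbR : ((((h*r-1)/l + (m+1)).choose (m+1) : ℕ) : ℝ)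
        ≤ (r:ℝ) * g + (r:ℝ) * ((((h*r-1)/l + m).choose m : ℕ) : ℝ) := by
      exact_mod_cast hcb
    have hf0 : (0:ℝ) ≤ (Nat.factorial (m+1) : ℝ) := by positivity
    have hD : (0:ℝ) < (r:ℝ)*(h:ℝ)^(m+1) := by positivity
    have hBalt : ((((h*r-1)/l + m).choose m : ℕ) : ℝ) * (Nat.factorial (m+1) : ℝ) / (h:ℝ)^(m+1)
        = ((r:ℝ)*((((h*r-1)/l + m).choose m : ℕ) : ℝ)*(Nat.factorial (m+1) : ℝ))
            /((r:ℝ)*(h:ℝ)^(m+1)) := by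
      rw [div_eq_div_iff (by positivity) hD.ne']
      ring
    have hFalt : ((g:ℕ) : ℝ) * (Nat.factorial (m+1) : ℝ) / (h:ℝ)^(m+1)
        = ((r:ℝ)*(g:ℝ)*(Nat.factorial (m+1) : ℝ))/((r:ℝ)*(h:ℝ)^(m+1)) := by
      rw [div_eq_div_iff (by positivity) hD.ne']
      ring
    rw [hBalt, hFalt, div_sub_div_same]
    rw [div_le_div_iff₀ hD hD]
    nlinarith [mul_le_mul_of_nonneg_right hcbR hf0, hD]
  · filter_upwards [eventually_ge_atTop 1] with h hh
    have hh' : (0:ℝ) < h := by exact_mod_cast hh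
    rw [hcard h hh]
    set g : ℕ := ((simplexF (m+1) ((h*r-1)/l)).filter
        fun b => (b 0 + ∑ j : Fin m, a j * b j.succ) % r = 0).card with hg
    have hcb := (count_bounds m r hr a ((h*r-1)/l)).2
    have hcbR : (r:ℝ) * g
        ≤ ((((h*r-1)/l + (m+1)).choose (m+1) : ℕ) : ℝ)
          + (r:ℝ) * ((((h*r-1)/l + m).choose m : ℕ) : ℝ) := by
      exact_mod_cast hcb
    have hf0 : (0:ℝ) ≤ (Nat.factorial (m+1) : ℝ) := by positivity
    have hD : (0:ℝ) < (r:ℝ)*(h:ℝ)^(m+1) := by positivity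
    have hBalt : ((((h*r-1)/l + m).choose m : ℕ) : ℝ) * (Nat.factorial (m+1) : ℝ) / (h:ℝ)^(m+1)
        = ((r:ℝ)*((((h*r-1)/l + m).choose m : ℕ) : ℝ)*(Nat.factorial (m+1) : ℝ))
            /((r:ℝ)*(h:ℝ)^(m+1)) := by
      rw [div_eq_div_iff (by positivity) hD.ne']
      ring
    have hFalt : ((g:ℕ) : ℝ) * (Nat.factorial (m+1) : ℝ) / (h:ℝ)^(m+1)
        = ((r:ℝ)*(g:ℝ)*(Nat.factorial (m+1) : ℝ))/((r:ℝ)*(h:ℝ)^(m+1)) := by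
      rw [div_eq_div_iff (by positivity) hD.ne']
      ring
    rw [hBalt, hFalt, ← add_div]
    rw [div_le_div_iff₀ hD hD]
    nlinarith [mul_le_mul_of_nonneg_right hcbR hf0, hD]
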